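/- Let f : R^n → R be differentiable with L-Lipschitz gradient on an open convex set O, and let g : R^n → R ∪ {∞} be proper and prox-bounded with threshold γ_g > 0. Define the forward–backward envelope F_γ(x) := inf_z { f(x) + ⟨∇f(x), z − x⟩ + (1/(2γ))‖z − x‖² + g(z) } and F := f + g. Then for every γ ∈ (0, γ_g) and every x ∈ dom g: (i) F_γ(x) ≤ F(x), and (ii) for every z ∈ argmin of the defining infimum (i.e., z ∈ T_γ(x)), F(z) ≤ F_γ(x) − ((1 − γL)/(2γ))‖z − x‖². -/

import Mathlib

set_option maxHeartbeats 1000000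

lemma descent_lemma {n : ℕ} (f : EuclideanSpace ℝ (Fin n) → ℝ)
    (gradf : EuclideanSpace ℝ (Fin n) → EuclideanSpace ℝ (Fin n)) (L : ℝ)
    (hgrad : ∀ x, HasGradientAt f (gradf x) x)
    (hL : ∀ x y, ‖gradf x - gradf y‖ ≤ L * ‖x - y‖)
    (x z : EuclideanSpace ℝ (Fin n)) :
    f z ≤ f x + (inner ℝ (gradf x) (z - x) : ℝ) + L / 2 * ‖z - x‖ ^ 2 := by
  set v := z - x with hv
  set ψ : ℝ → ℝ := fun t => f (x + t • v) - t * (inner ℝ (gradf x) v : ℝ)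
      - L / 2 * t ^ 2 * ‖v‖ ^ 2 with hψ
  have hψd : ∀ t : ℝ, HasDerivAt ψ
      ((inner ℝ (gradf (x + t • v)) v : ℝ) - (inner ℝ (gradf x) v : ℝ) - L * t * ‖v‖ ^ 2) t := by
    intro t
    have hc : HasDerivAt (fun t : ℝ => x + t • v) v t := by
      simpa using ((hasDerivAt_id t).smul_const v).const_add x
    have hf : HasDerivAt (fun t : ℝ => f (x + t • v))
        ((inner ℝ (gradf (x + t • v)) v : ℝ)) t := by
      have := (hgrad (x + t • v)).hasFDerivAt.comp_hasDerivAt t hc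
      exact this
    have h2 : HasDerivAt (fun t : ℝ => t * (inner ℝ (gradf x) v : ℝ))
        ((inner ℝ (gradf x) v : ℝ)) t := hasDerivAt_mul_const _
    have h3 : HasDerivAt (fun t : ℝ => L / 2 * t ^ 2 * ‖v‖ ^ 2) (L * t * ‖v‖ ^ 2) t := by
      have := ((hasDerivAt_pow 2 t).const_mul (L / 2)).mul_const (‖v‖ ^ 2)
      refine this.congr_deriv ?_
      rw [show (2:ℕ) - 1 = 1 from rfl]
      push_cast
      ring
    exact (hf.sub h2).sub h3
  have hanti : AntitoneOn ψ (Set.Icc (0 : ℝ) 1) := by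
    apply antitoneOn_of_deriv_nonpos (convex_Icc 0 1)
    · exact fun t _ => (hψd t).differentiableAt.continuousAt.continuousWithinAt
    · exact fun t _ => (hψd t).differentiableAt.differentiableWithinAt
    · intro t ht
      rw [interior_Icc] at ht
      rw [(hψd t).deriv]
      have h1 : (inner ℝ (gradf (x + t • v)) v : ℝ) - (inner ℝ (gradf x) v : ℝ)
          = (inner ℝ (gradf (x + t • v) - gradf x) v : ℝ) := by
        rw [inner_sub_left]
      have h2 : (inner ℝ (gradf (x + t • v) - gradf x) v : ℝ)
          ≤ ‖gradf (x + t • v) - gradf x‖ * ‖v‖ := real_inner_le_norm _ _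
      have h3 : ‖gradf (x + t • v) - gradf x‖ ≤ L * ‖(x + t • v) - x‖ := hL _ _
      have h4 : ‖(x + t • v) - x‖ = t * ‖v‖ := by
        simp [norm_smul, abs_of_pos ht.1]
      rw [h4] at h3
      have h5 : (inner ℝ (gradf (x + t • v) - gradf x) v : ℝ) ≤ L * t * ‖v‖ ^ 2 := by
        calc (inner ℝ (gradf (x + t • v) - gradf x) v : ℝ)
            ≤ ‖gradf (x + t • v) - gradf x‖ * ‖v‖ := h2
          _ ≤ L * (t * ‖v‖) * ‖v‖ := mul_le_mul_of_nonneg_right h3 (norm_nonneg v)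
          _ = L * t * ‖v‖ ^ 2 := by ring
      linarith [h1, h5]
  have := hanti (Set.left_mem_Icc.2 zero_le_one) (Set.right_mem_Icc.2 zero_le_one) zero_le_one
  simp only [hψ, zero_smul, add_zero, one_smul, zero_mul, one_mul, one_pow, mul_zero,
    zero_pow, sub_zero] at this
  have hz : x + v = z := by rw [hv]; simp
  rw [hz] at this
  linarith [this]

/-- basic properties of the forward–backward envelope. -/
theorem fbe_basic (n : ℕ) (f : EuclideanSpace ℝ (Fin n) → ℝ)
    (gradf : EuclideanSpace ℝ (Fin n) → EuclideanSpace ℝ (Fin n)) (L γg : ℝ)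
    (hgrad : ∀ x, HasGradientAt f (gradf x) x)
    (hL : ∀ x y, ‖gradf x - gradf y‖ ≤ L * ‖x - y‖)
    (g : EuclideanSpace ℝ (Fin n) → EReal)
    (hgproper : ∃ z, g z ≠ ⊤) (hgbot : ∀ z, g z ≠ ⊥) (hγg : 0 < γg)
    (Fγ : ℝ → EuclideanSpace ℝ (Fin n) → EReal)
    (hFγ : ∀ γ x, Fγ γ x = ⨅ z, ((f x + (inner ℝ (gradf x) (z - x) : ℝ)
        + 1 / (2 * γ) * ‖z - x‖ ^ 2 : ℝ) : EReal) + g z)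
    (hproxbdd : ∀ γ ∈ Set.Ioo (0 : ℝ) γg, ∀ x, Fγ γ x ≠ ⊥)
    (γ : ℝ) (hγ : γ ∈ Set.Ioo (0 : ℝ) γg)
    (x : EuclideanSpace ℝ (Fin n)) (hx : g x ≠ ⊤) :
    Fγ γ x ≤ (f x : EReal) + g x ∧
    ∀ z : EuclideanSpace ℝ (Fin n),
      (∀ z', ((f x + (inner ℝ (gradf x) (z - x) : ℝ) + 1 / (2 * γ) * ‖z - x‖ ^ 2 : ℝ) : EReal) + g z
        ≤ ((f x + (inner ℝ (gradf x) (z' - x) : ℝ) + 1 / (2 * γ) * ‖z' - x‖ ^ 2 : ℝ) : EReal) + g z') →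
      (f z : EReal) + g z ≤ Fγ γ x - (((1 - γ * L) / (2 * γ) * ‖z - x‖ ^ 2 : ℝ) : EReal) := by
  have hγ0 : (0 : ℝ) < γ := hγ.1
  constructor
  · rw [hFγ]
    refine le_trans (iInf_le _ x) ?_
    simp
  · intro z hz
    lift g x to ℝ using ⟨hx, hgbot x⟩ with s hs
    have hgz_ne_top : g z ≠ ⊤ := by
      intro h
      have h1 := hz x
      rw [h, ← hs, EReal.coe_add_top, ← EReal.coe_add] at h1
      exact EReal.coe_ne_top _ (top_le_iff.1 h1)
    lift g z to ℝ using ⟨hgz_ne_top, hgbot z⟩ with r hr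
    have hEq : Fγ γ x = ((f x + (inner ℝ (gradf x) (z - x) : ℝ)
        + 1 / (2 * γ) * ‖z - x‖ ^ 2 : ℝ) : EReal) + (r : EReal) := by
      rw [hFγ]
      refine le_antisymm ?_ (le_iInf hz)
      exact (iInf_le
        (fun z => ((f x + (inner ℝ (gradf x) (z - x) : ℝ)
          + 1 / (2 * γ) * ‖z - x‖ ^ 2 : ℝ) : EReal) + g z) z).trans_eq (by rw [hr])
    rw [hEq, ← EReal.coe_add, ← EReal.coe_add, ← EReal.coe_sub, EReal.coe_le_coe_iff]
    have hkey := descent_lemma f gradf L hgrad hL x z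
    have harith : 1 / (2 * γ) * ‖z - x‖ ^ 2 - (1 - γ * L) / (2 * γ) * ‖z - x‖ ^ 2
        = L / 2 * ‖z - x‖ ^ 2 := by
      field_simp
      ring
    linarith
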